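/- Let a₁ < a₂ < … < a_N be positive integers and w₁, …, w_N strictly positive real numbers. Let g_k be the coefficient of z^k in the power series expansion of 1 / (1 - ∑_{i=1}^N w_i z^{a_i}). Then for every natural number k, g_k ≠ 0 if and only if k belongs to the numerical semigroup S = ⟨a₁, …, a_N⟩ = { ∑ n_i a_i : n_i ∈ ℕ }. -/

import Mathlib

theorem stmt_1 (N : ℕ) (a : Fin (N + 1) → ℕ) (w : Fin (N + 1) → ℝ)
    (ha : StrictMono a) (hapos : ∀ i, 0 < a i) (hw : ∀ i, 0 < w i)
    (g : ℕ → ℝ)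
    (hg : ∀ k, g k = PowerSeries.coeff (R := ℝ) k
      (1 - ∑ i, PowerSeries.C (R := ℝ) (w i) * PowerSeries.X ^ a i)⁻¹) :
    ∀ k : ℕ, g k ≠ 0 ↔ ∃ n : Fin (N + 1) → ℕ, k = ∑ i, n i * a i := by
  set f : PowerSeries ℝ := ∑ i, PowerSeries.C (R := ℝ) (w i) * PowerSeries.X ^ a i with hf
  have hcc : PowerSeries.constantCoeff (R := ℝ) (1 - f) ≠ 0 := by
    have : PowerSeries.constantCoeff (R := ℝ) f = 0 := by
      rw [hf, map_sum]
      apply Finset.sum_eq_zero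
      intro i _
      rw [map_mul, PowerSeries.constantCoeff_C, map_pow, PowerSeries.constantCoeff_X,
        zero_pow (hapos i).ne', mul_zero]
    simp [this]
  have hmul : (1 - f) * (1 - f)⁻¹ = 1 := PowerSeries.mul_inv_cancel _ hcc
  have key : ∀ k, g k = (if k = 0 then (1:ℝ) else 0) +
      ∑ i, w i * (if a i ≤ k then g (k - a i) else 0) := by
    intro k
    have h1 := congrArg (PowerSeries.coeff (R := ℝ) k) hmul
    rw [sub_mul, one_mul, map_sub, PowerSeries.coeff_one] at h1
    have h2 : (PowerSeries.coeff (R := ℝ) k) (f * (1 - f)⁻¹) =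
        ∑ i, w i * (if a i ≤ k then g (k - a i) else 0) := by
      rw [hf, Finset.sum_mul, map_sum]
      apply Finset.sum_congr rfl
      intro i _
      rw [mul_assoc, PowerSeries.coeff_C_mul, mul_comm (PowerSeries.X ^ a i),
        PowerSeries.coeff_mul_X_pow']
      congr 1
      split <;> simp [hg, hf]
    rw [h2] at h1
    have h3 := hg k
    linarith [h1, h3]
  have hplus : ∀ (m : Fin (N + 1) → ℕ) (i : Fin (N + 1)),
      ∑ j, (m j + if j = i then 1 else 0) * a j = (∑ j, m j * a j) + a i := by
    intro m i
    simp [add_mul, Finset.sum_add_distrib, ite_mul, Finset.sum_ite_eq']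
  have main : ∀ k, 0 ≤ g k ∧ (g k ≠ 0 ↔ ∃ n : Fin (N + 1) → ℕ, k = ∑ i, n i * a i) := by
    intro k
    induction k using Nat.strong_induction_on with
    | _ k ih =>
      rcases Nat.eq_zero_or_pos k with hk0 | hkpos
      · subst hk0
        have hg0 : g 0 = 1 := by
          rw [key 0, if_pos rfl,
            Finset.sum_eq_zero (fun i _ => by
              rw [if_neg (by have := hapos i; omega : ¬ a i ≤ 0), mul_zero])]
          norm_num
        refine ⟨by rw [hg0]; norm_num, ?_, ?_⟩
        · intro _; exact ⟨fun _ => 0, by simp⟩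
        · intro _; rw [hg0]; norm_num
      · have hrec : g k = ∑ i, w i * (if a i ≤ k then g (k - a i) else 0) := by
          rw [key k, if_neg hkpos.ne', zero_add]
        have hterm : ∀ i, 0 ≤ w i * (if a i ≤ k then g (k - a i) else 0) := by
          intro i
          apply mul_nonneg (hw i).le
          split
          · exact (ih (k - a i) (by have := hapos i; omega)).1
          · exact le_refl 0
        have hnn : 0 ≤ g k := by
          rw [hrec]; exact Finset.sum_nonneg fun i _ => hterm i
        refine ⟨hnn, ?_, ?_⟩
        · intro hne
          rw [hrec] at hne
          obtain ⟨i, _, hi⟩ := Finset.exists_ne_zero_of_sum_ne_zero hne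
          have hle : a i ≤ k := by
            by_contra h
            rw [if_neg h, mul_zero] at hi
            exact hi rfl
          rw [if_pos hle] at hi
          have hgne : g (k - a i) ≠ 0 := fun h => hi (by rw [h, mul_zero])
          obtain ⟨n, hn⟩ := ((ih (k - a i) (by have := hapos i; omega)).2).1 hgne
          refine ⟨fun j => n j + if j = i then 1 else 0, ?_⟩
          rw [hplus n i, ← hn]
          omega
        · intro ⟨n, hn⟩
          have hex : ∃ i, 0 < n i := by
            by_contra h
            push_neg at h
            have hz : ∀ i, n i = 0 := fun i => Nat.le_zero.mp (h i)
            simp [hz] at hn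
            omega
          obtain ⟨i, hni⟩ := hex
          set n' : Fin (N + 1) → ℕ := Function.update n i (n i - 1) with hn'
          have hnn' : n = fun j => n' j + if j = i then 1 else 0 := by
            funext j
            by_cases hj : j = i
            · subst hj; simp [hn', Function.update_self]; omega
            · simp [hn', Function.update_of_ne hj, hj]
          have hk' : k = (∑ j, n' j * a j) + a i := by
            rw [hn, hnn', hplus n' i]
          have hle : a i ≤ k := by omega
          have hsub : k - a i = ∑ j, n' j * a j := by omega
          have hgpos : 0 < g (k - a i) := by
            rcases (ih (k - a i) (by have := hapos i; omega)) with ⟨h0, h1⟩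
            rcases h0.lt_or_eq with h | h
            · exact h
            · exact absurd h.symm ((h1.mpr ⟨n', hsub⟩))
          have : 0 < g k := by
            rw [hrec]
            apply Finset.sum_pos' (fun j _ => hterm j) ⟨i, Finset.mem_univ i, ?_⟩
            rw [if_pos hle]
            exact mul_pos (hw i) hgpos
          exact this.ne'
  intro k
  exact (main k).2
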